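/- Suppose Δ_t ≥ 0 satisfy Δ₁ ≤ C/2 and Δ_{t+1} ≤ (t/(t+1))Δ_t + C/(2(t+1)²) for all t ≥ 1, where C ≥ 0. Then Δ_t ≤ C·log₂(2t)/(2t) for all t ≥ 1. -/

import Mathlib

/-- Recursive bound: if `Δ₁ ≤ C/2` and `Δ_{t+1} ≤ (t/(t+1))Δ_t + C/(2(t+1)²)`, then
`Δ_t ≤ C log₂(2t)/(2t)` for all `t ≥ 1`. -/
theorem stmt_4 (C : ℝ) (hC : 0 ≤ C) (Δ : ℕ → ℝ)
    (hΔ : ∀ t : ℕ, 1 ≤ t → 0 ≤ Δ t)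
    (h1 : Δ 1 ≤ C / 2)
    (hrec : ∀ t : ℕ, 1 ≤ t →
        Δ (t + 1) ≤ ((t : ℝ) / ((t : ℝ) + 1)) * Δ t + C / (2 * ((t : ℝ) + 1) ^ 2)) :
    ∀ t : ℕ, 1 ≤ t → Δ t ≤ C * Real.logb 2 (2 * t) / (2 * t) := by
  have hlog2 : (0:ℝ) < Real.log 2 := Real.log_pos one_lt_two
  have hlog2' : Real.log 2 ≤ 1 := by
    nlinarith [Real.log_le_sub_one_of_pos (zero_lt_two (α := ℝ))]
  refine Nat.le_induction ?_ ?_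
  · simpa [Real.logb_self_eq_one] using h1
  · intro t ht ih
    have hT : (1:ℝ) ≤ (t:ℝ) := by exact_mod_cast ht
    have hT0 : (0:ℝ) < (t:ℝ) := by linarith
    have hT1 : (0:ℝ) < (t:ℝ) + 1 := by linarith
    set T := (t:ℝ) with hTdef
    -- key log inequality : 1/(T+1) ≤ log (T+1) - log T
    have hlogkey : 1/(T+1) ≤ Real.log (T+1) - Real.log T := by
      have h := Real.log_le_sub_one_of_pos (show 0 < T/(T+1) by positivity)
      rw [Real.log_div (ne_of_gt hT0) (ne_of_gt hT1)] at h
      have : T/(T+1) - 1 = -(1/(T+1)) := by field_simp; ring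
      linarith [this ▸ h]
    have hlogstep : Real.logb 2 (2*T) + 1/(T+1) ≤ Real.logb 2 (2*(T+1)) := by
      have e1 : Real.logb 2 (2*T) = (Real.log 2 + Real.log T)/Real.log 2 := by
        rw [Real.logb, Real.log_mul two_ne_zero (ne_of_gt hT0)]
      have e2 : Real.logb 2 (2*(T+1)) = (Real.log 2 + Real.log (T+1))/Real.log 2 := by
        rw [Real.logb, Real.log_mul two_ne_zero (ne_of_gt hT1)]
      have h1T : (0:ℝ) < 1/(T+1) := by positivity
      have hkey2 : 1/(T+1) ≤ (Real.log (T+1) - Real.log T)/Real.log 2 := by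
        rw [le_div_iff₀ hlog2]
        nlinarith [mul_le_mul_of_nonneg_left hlog2' h1T.le]
      have hdiff : (Real.log 2 + Real.log (T+1))/Real.log 2
          - (Real.log 2 + Real.log T)/Real.log 2
          = (Real.log (T+1) - Real.log T)/Real.log 2 := by ring
      rw [e1, e2]; linarith
    have hcast : ((t+1 : ℕ) : ℝ) = T + 1 := by push_cast; ring
    rw [hcast]
    have step1 := hrec t ht
    have step2 : (T/(T+1)) * Δ t ≤ (T/(T+1)) * (C * Real.logb 2 (2*T) / (2*T)) := by
      apply mul_le_mul_of_nonneg_left ih (by positivity)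
    have e3 : (T/(T+1)) * (C * Real.logb 2 (2*T) / (2*T)) =
        C * Real.logb 2 (2*T) / (2*(T+1)) := by
      field_simp
    have step3 : C * Real.logb 2 (2*T) / (2*(T+1)) + C / (2*(T+1)^2)
        ≤ C * Real.logb 2 (2*(T+1)) / (2*(T+1)) := by
      have e4 : C * Real.logb 2 (2*T) / (2*(T+1)) + C / (2*(T+1)^2)
          = (C * (Real.logb 2 (2*T) + 1/(T+1))) / (2*(T+1)) := by
        field_simp
      rw [e4]
      gcongr
    calc Δ (t+1) ≤ (T/(T+1)) * Δ t + C / (2*(T+1)^2) := step1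
      _ ≤ C * Real.logb 2 (2*T) / (2*(T+1)) + C / (2*(T+1)^2) := by
          rw [← e3]; linarith [step2]
      _ ≤ C * Real.logb 2 (2*(T+1)) / (2*(T+1)) := step3
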